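/- Let G be a graph of genus g ≥ 2 and v a vertex of G such that the graph G' obtained by deleting v and all edges incident to v is a tree. Then r(g·(v)) = 0, i.e., v is not a Weierstrass point of G. -/
import Mathlib


open Finset

structure Multigraph (V : Type) [Fintype V] [DecidableEq V] : Type where
  mult : V → V → ℕ
  symm : ∀ u v : V, mult u v = mult v u
  loopless : ∀ v : V, mult v v = 0
  connected : ∀ u v : V, Relation.ReflTransGen (fun a b => 0 < mult a b) u v

def divDeg {V : Type} [Fintype V] (D : V → ℤ) : ℤ := ∑ v, D v

def Effective {V : Type} (D : V → ℤ) : Prop := ∀ v, 0 ≤ D v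

namespace Multigraph

variable {V : Type} [Fintype V] [DecidableEq V]

def degree (G : Multigraph V) (v : V) : ℕ := ∑ w, G.mult v w

def edgeCount (G : Multigraph V) : ℕ := (∑ v, G.degree v) / 2

def genus (G : Multigraph V) : ℤ := (G.edgeCount : ℤ) - (Fintype.card V : ℤ) + 1

def laplacian (G : Multigraph V) (f : V → ℤ) : V → ℤ :=
  fun v => ∑ w, (G.mult v w : ℤ) * (f v - f w)

def Principal (G : Multigraph V) (D : V → ℤ) : Prop := ∃ f : V → ℤ, D = G.laplacian f

def Winnable (G : Multigraph V) (D : V → ℤ) : Prop :=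
  ∃ E : V → ℤ, Effective E ∧ G.Principal (D - E)

noncomputable def rank (G : Multigraph V) (D : V → ℤ) : ℤ :=
  sSup (insert (-1) {k : ℤ | 0 ≤ k ∧ ∀ E : V → ℤ, Effective E → divDeg E = k →
    G.Winnable (D - E)})

end Multigraph

namespace ResidualTreeAux

open Multigraph

variable {V : Type} [Fintype V] [DecidableEq V]

/-- Handshake: the sum of degrees is twice the edge count. -/
lemma two_mul_edgeCount (G : Multigraph V) :
    2 * G.edgeCount = ∑ v, G.degree v := by
  classical
  have key : ∀ (e : V ≃ Fin (Fintype.card V)),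
      (∑ v, G.degree v) =
        2 * ∑ v, ∑ w, (if e w < e v then G.mult v w else 0) := by
    intro e
    have hpt : ∀ v w : V, G.mult v w =
        (if e w < e v then G.mult v w else 0) +
        (if e v < e w then G.mult v w else 0) := by
      intro v w
      rcases lt_trichotomy (e v) (e w) with h | h | h
      · rw [if_neg (by omega), if_pos h]; omega
      · have : v = w := e.injective (by exact_mod_cast Fin.ext (by omega))
        subst this
        simp [G.loopless]
      · rw [if_pos h, if_neg (by omega)]; omega
    have h1 : (∑ v, G.degree v) =
        (∑ v, ∑ w, (if e w < e v then G.mult v w else 0)) +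
        (∑ v, ∑ w, (if e v < e w then G.mult v w else 0)) := by
      rw [← Finset.sum_add_distrib]
      refine Finset.sum_congr rfl fun v _ => ?_
      rw [← Finset.sum_add_distrib]
      exact Finset.sum_congr rfl fun w _ => hpt v w
    have h2 : (∑ v, ∑ w, (if e v < e w then G.mult v w else 0)) =
        (∑ v, ∑ w, (if e w < e v then G.mult v w else 0)) := by
      rw [Finset.sum_comm]
      refine Finset.sum_congr rfl fun v _ => Finset.sum_congr rfl fun w _ => ?_
      rw [G.symm]
    rw [h1, h2]
    ring
  obtain ⟨e⟩ := Fintype.truncEquivFin V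
  have := key e
  rw [Multigraph.edgeCount, this]
  omega

def reaches {α : Type} (r : α → α → Prop) : ℕ → α → α → Prop
  | 0, a, b => a = b
  | (k+1), a, b => ∃ c, reaches r k a c ∧ r c b

lemma reflTransGen_reaches {α : Type} {r : α → α → Prop} {a b : α}
    (h : Relation.ReflTransGen r a b) : ∃ k, reaches r k a b := by
  induction h with
  | refl => exact ⟨0, rfl⟩
  | tail _hab h2 ih =>
    obtain ⟨k, hk⟩ := ih
    exact ⟨k + 1, _, hk, h2⟩

/-- Core non-winnability lemma (Baker–Norine Theorem 3.3, specialized). -/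
lemma not_winnable_aux (G : Multigraph V) (u v : V) (huv : u ≠ v)
    (ord : V → ℕ)
    (hmax : ∀ w, w ≠ v → ord w < ord v)
    (hstep : ∀ w, w ≠ u → w ≠ v → ∃ x, 0 < G.mult w x ∧ ord x < ord w)
    (D : V → ℤ)
    (hDu : D u ≤ -1)
    (hDv : D v ≤ (G.degree v : ℤ) - 1)
    (hDw : ∀ w, w ≠ u → w ≠ v → D w ≤ 0) :
    ¬ G.Winnable D := by
  rintro ⟨E, hE, f, hf⟩
  have hlap : ∀ w, D w - E w = ∑ x, (G.mult w x : ℤ) * (f w - f x) := by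
    intro w
    have := congrFun hf w
    simpa [Multigraph.laplacian, Pi.sub_apply] using this
  -- pick a maximizer of f
  obtain ⟨b, -, hb⟩ := Finset.exists_max_image (Finset.univ : Finset V) f ⟨u, mem_univ u⟩
  set M : ℤ := f b with hM
  have hfle : ∀ a : V, f a ≤ M := fun a => hb a (mem_univ a)
  -- pick an ord-minimal maximizer
  have hWne : (Finset.univ.filter (fun w => f w = M)).Nonempty :=
    ⟨b, by simp [hM]⟩
  obtain ⟨w0, hw0mem, hw0min⟩ :=
    Finset.exists_min_image (Finset.univ.filter (fun w => f w = M)) ord hWne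
  have hw0M : f w0 = M := (Finset.mem_filter.mp hw0mem).2
  have hmin : ∀ y : V, f y = M → ord w0 ≤ ord y := fun y hy =>
    hw0min y (Finset.mem_filter.mpr ⟨mem_univ y, hy⟩)
  have hterm_nonneg : ∀ x : V, 0 ≤ (G.mult w0 x : ℤ) * (f w0 - f x) := by
    intro x
    apply mul_nonneg (by positivity)
    rw [hw0M]
    linarith [hfle x]
  have hlap0 : (0:ℤ) ≤ ∑ x, (G.mult w0 x : ℤ) * (f w0 - f x) :=
    Finset.sum_nonneg fun x _ => hterm_nonneg x
  by_cases h1 : w0 = u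
  · -- w0 = u : D u - E u ≤ -1 but laplacian ≥ 0
    have hDu' : D w0 ≤ -1 := by rw [h1]; exact hDu
    linarith [hlap w0, hE w0, hlap0]
  · by_cases h2 : w0 = v
    · -- w0 = v : laplacian at v is at least degree v
      subst h2
      have hterm_ge : ∀ x : V, (G.mult w0 x : ℤ) ≤ (G.mult w0 x : ℤ) * (f w0 - f x) := by
        intro x
        by_cases hxv : x = w0
        · subst hxv; simp [G.loopless]
        · have hxM : f x ≠ M := fun hfx => absurd (hmax x hxv) (not_lt.mpr (hmin x hfx))
          have : f x ≤ M - 1 := by have := hfle x; omega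
          have h1' : (1:ℤ) ≤ f w0 - f x := by rw [hw0M]; omega
          nlinarith [Nat.cast_nonneg (α := ℤ) (G.mult w0 x)]
      have hsum : ((G.degree w0 : ℤ)) ≤ ∑ x, (G.mult w0 x : ℤ) * (f w0 - f x) := by
        rw [Multigraph.degree, Nat.cast_sum]
        exact Finset.sum_le_sum fun x _ => hterm_ge x
      have hEw := hE w0
      linarith [hlap w0]
    · -- w0 ≠ u, w0 ≠ v : some edge goes to an earlier vertex
      obtain ⟨x, hx, hxord⟩ := hstep w0 h1 h2
      have hxM : f x ≠ M := fun hfx => absurd hxord (not_lt.mpr (hmin x hfx))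
      have hfx : f x ≤ M - 1 := by have := hfle x; omega
      have hterm1 : (1:ℤ) ≤ (G.mult w0 x : ℤ) * (f w0 - f x) := by
        have hm1 : (1:ℤ) ≤ (G.mult w0 x : ℤ) := by exact_mod_cast hx
        have : (1:ℤ) ≤ f w0 - f x := by rw [hw0M]; omega
        nlinarith
      have hsum1 : (1:ℤ) ≤ ∑ y, (G.mult w0 y : ℤ) * (f w0 - f y) :=
        le_trans hterm1 (Finset.single_le_sum (fun y _ => hterm_nonneg y) (mem_univ x))
      have hEw := hE w0
      have hD0 := hDw w0 h1 h2
      linarith [hlap w0]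

end ResidualTreeAux

theorem residual_tree_not_weierstrass {V : Type} [Fintype V] [DecidableEq V]
    (G : Multigraph V) (v : V) (hg : 2 ≤ G.genus)
    (G' : Multigraph {w : V // w ≠ v})
    (hsub : ∀ a b : {w : V // w ≠ v}, G'.mult a b = G.mult a b)
    (htree : (G'.edgeCount : ℤ) = (Fintype.card {w : V // w ≠ v} : ℤ) - 1) :
    G.rank (G.genus • (fun w => if w = v then (1 : ℤ) else 0)) = 0 := by
  classical
  set D := (G.genus • (fun w => if w = v then (1 : ℤ) else 0) : V → ℤ) with hDdef
  have hD : ∀ w, D w = if w = v then G.genus else 0 := by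
    intro w
    by_cases h : w = v <;> simp [hDdef, h]
  -- card of the subtype
  have hcardsub : (Fintype.card {w : V // w ≠ v} : ℤ) = (Fintype.card V : ℤ) - 1 := by
    have h1 : Fintype.card {w : V // ¬ (w = v)} =
        Fintype.card V - Fintype.card {w : V // w = v} :=
      Fintype.card_subtype_compl _
    have h2 : Fintype.card {w : V // w = v} = 1 := Fintype.card_subtype_eq v
    have h3 : 1 ≤ Fintype.card V := Fintype.card_pos_iff.mpr ⟨v⟩
    have h4 : Fintype.card {w : V // w ≠ v} = Fintype.card {w : V // ¬ (w = v)} := rfl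
    omega
  -- a sum over V splits into the term at v plus a sum over the subtype
  have hsplit : ∀ (g : V → ℤ), ∑ w, g w = g v + ∑ w : {w : V // w ≠ v}, g w.1 := by
    intro g
    rw [← Finset.add_sum_erase _ g (mem_univ v)]
    congr 1
    exact Finset.sum_subtype (p := fun w => w ≠ v) (univ.erase v)
      (fun x => by simp) g
  -- the degree of v
  have hdegv : (G.degree v : ℤ) = G.genus + 1 := by
    have hs : 2 * (G.edgeCount : ℤ) = ∑ w, (G.degree w : ℤ) := by
      exact_mod_cast ResidualTreeAux.two_mul_edgeCount G
    have hs' : 2 * (G'.edgeCount : ℤ) = ∑ w : {w : V // w ≠ v}, (G'.degree w : ℤ) := by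
      exact_mod_cast ResidualTreeAux.two_mul_edgeCount G'
    have hdw : ∀ w : {w : V // w ≠ v},
        (G.degree w.1 : ℤ) = (G'.degree w : ℤ) + (G.mult w.1 v : ℤ) := by
      intro w
      have h1 : ∑ x, (G.mult w.1 x : ℤ) =
          (G.mult w.1 v : ℤ) + ∑ x : {x : V // x ≠ v}, (G.mult w.1 x.1 : ℤ) :=
        hsplit _
      have h2 : ∑ x : {x : V // x ≠ v}, (G.mult w.1 x.1 : ℤ) = (G'.degree w : ℤ) := by
        rw [Multigraph.degree]
        push_cast
        exact Finset.sum_congr rfl fun x _ => by rw [hsub]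
      rw [Multigraph.degree]
      push_cast
      rw [h1, h2]
      ring
    have hmv : ∑ w : {w : V // w ≠ v}, (G.mult w.1 v : ℤ) = (G.degree v : ℤ) := by
      have h := hsplit (fun w => (G.mult w v : ℤ))
      have hvv : (G.mult v v : ℤ) = 0 := by simp [G.loopless]
      have hsymm : ∑ w, (G.mult w v : ℤ) = (G.degree v : ℤ) := by
        rw [Multigraph.degree]
        push_cast
        exact Finset.sum_congr rfl fun w _ => by rw [G.symm]
      rw [hsymm, hvv] at h
      linarith
    have hsum2 : ∑ w : {w : V // w ≠ v}, (G.degree w.1 : ℤ) =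
        2 * (G'.edgeCount : ℤ) + (G.degree v : ℤ) := by
      calc ∑ w : {w : V // w ≠ v}, (G.degree w.1 : ℤ)
          = ∑ w : {w : V // w ≠ v}, ((G'.degree w : ℤ) + (G.mult w.1 v : ℤ)) :=
            Finset.sum_congr rfl fun w _ => hdw w
        _ = (∑ w : {w : V // w ≠ v}, (G'.degree w : ℤ)) +
            ∑ w : {w : V // w ≠ v}, (G.mult w.1 v : ℤ) := Finset.sum_add_distrib
        _ = 2 * (G'.edgeCount : ℤ) + (G.degree v : ℤ) := by rw [← hs', hmv]
    have hall := hsplit (fun w => (G.degree w : ℤ))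
    rw [hsum2] at hall
    rw [Multigraph.genus]
    rw [hall] at hs
    linarith [htree, hcardsub]
  -- choose a base vertex u ≠ v
  have hone : 0 < Fintype.card {w : V // w ≠ v} := by
    have h0 : (0:ℤ) ≤ (G'.edgeCount : ℤ) := Int.ofNat_nonneg _
    omega
  obtain ⟨u0⟩ := Fintype.card_pos_iff.mp hone
  have huv : u0.1 ≠ v := u0.2
  -- distance function on the tree
  have hreach : ∀ x : {w : V // w ≠ v},
      ∃ k, ResidualTreeAux.reaches (fun a b => 0 < G'.mult a b) k u0 x :=
    fun x => ResidualTreeAux.reflTransGen_reaches (G'.connected u0 x)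
  let d : {w : V // w ≠ v} → ℕ := fun x => Nat.find (hreach x)
  let B : ℕ := (Finset.univ.sup d) + 1
  let ord : V → ℕ := fun w => if h : w = v then B else d ⟨w, h⟩
  have hordv : ord v = B := by simp [ord]
  have hord' : ∀ (w : V) (h : w ≠ v), ord w = d ⟨w, h⟩ := by
    intro w h
    simp [ord, h]
  have hmax : ∀ w, w ≠ v → ord w < ord v := by
    intro w hw
    rw [hordv, hord' w hw]
    exact Nat.lt_succ_of_le (Finset.le_sup (mem_univ _))
  have hstep : ∀ w, w ≠ u0.1 → w ≠ v → ∃ x, 0 < G.mult w x ∧ ord x < ord w := by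
    intro w hwu hwv
    have hspec : ResidualTreeAux.reaches (fun a b => 0 < G'.mult a b)
        (d ⟨w, hwv⟩) u0 ⟨w, hwv⟩ := Nat.find_spec (hreach ⟨w, hwv⟩)
    rcases hd : d ⟨w, hwv⟩ with _ | k
    · rw [hd] at hspec
      have heq : u0 = ⟨w, hwv⟩ := hspec
      exact absurd (congrArg Subtype.val heq).symm hwu
    · rw [hd] at hspec
      obtain ⟨c, hc1, hc2⟩ := hspec
      refine ⟨c.1, ?_, ?_⟩
      · have h1 : 0 < G.mult c.1 w := by
          have := hc2
          rwa [hsub] at this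
        rwa [G.symm] at h1
      · have hdc : d c ≤ k := Nat.find_le hc1
        have h1 : ord c.1 = d c := by
          rw [hord' c.1 c.2]
        have h2 : ord w = d ⟨w, hwv⟩ := hord' w hwv
        omega
  -- the key non-winnability fact
  have hkey : ∀ E : V → ℤ, Effective E → 1 ≤ E u0.1 → ¬ G.Winnable (D - E) := by
    intro E hE hEu
    apply ResidualTreeAux.not_winnable_aux G u0.1 v huv ord hmax hstep
    · have := hD u0.1
      rw [if_neg huv] at this
      simp only [Pi.sub_apply, this]
      omega
    · simp only [Pi.sub_apply, hD v, if_pos rfl, hdegv]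
      have := hE v
      omega
    · intro w hwu hwv
      have := hE w
      simp only [Pi.sub_apply, hD w, if_neg hwv]
      omega
  -- compute the rank
  rw [Multigraph.rank]
  have hub : ∀ k ∈ insert (-1 : ℤ) {k : ℤ | 0 ≤ k ∧ ∀ E : V → ℤ, Effective E →
      divDeg E = k → G.Winnable (D - E)}, k ≤ 0 := by
    intro k hk
    rcases hk with hk | ⟨hk0, hkS⟩
    · omega
    by_contra hk1
    push_neg at hk1
    have hk1' : 1 ≤ k := hk1
    have hEeff : Effective
        (fun w => (if w = u0.1 then (1:ℤ) else 0) + (if w = v then k - 1 else 0)) := by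
      intro w
      dsimp only
      split_ifs <;> omega
    have hEdeg : divDeg
        (fun w => (if w = u0.1 then (1:ℤ) else 0) + (if w = v then k - 1 else 0)) = k := by
      rw [divDeg, Finset.sum_add_distrib,
        Finset.sum_ite_eq' univ u0.1 (fun _ => (1:ℤ)),
        Finset.sum_ite_eq' univ v (fun _ => k - 1),
        if_pos (mem_univ _), if_pos (mem_univ _)]
      ring
    have hEu : 1 ≤ (fun w => (if w = u0.1 then (1:ℤ) else 0) +
        (if w = v then k - 1 else 0)) u0.1 := by
      dsimp only
      rw [if_pos rfl, if_neg huv]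
      omega
    exact hkey _ hEeff hEu (hkS _ hEeff hEdeg)
  have h0 : (0 : ℤ) ∈ {k : ℤ | 0 ≤ k ∧ ∀ E : V → ℤ, Effective E →
      divDeg E = k → G.Winnable (D - E)} := by
    refine ⟨le_refl 0, fun E hE hEdeg => ?_⟩
    have hE0 : ∀ w, E w = 0 := by
      have := (Finset.sum_eq_zero_iff_of_nonneg (fun w _ => hE w)).mp hEdeg
      exact fun w => this w (mem_univ w)
    refine ⟨D - E, ?_, 0, ?_⟩
    · intro w
      simp only [Pi.sub_apply, hE0 w, sub_zero, hD w]
      split_ifs <;> omega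
    · funext w
      simp [Multigraph.laplacian]
  exact le_antisymm (csSup_le ⟨-1, Set.mem_insert _ _⟩ hub)
    (le_csSup ⟨0, fun k hk => hub k hk⟩ (Set.mem_insert_of_mem _ h0))
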